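/- arXiv:2512.12971 — 3 statements merged into one kernel-verified Lean document; each statement's English description precedes it below -/
import Mathlib

section
/- Let R be a probability measure on a measurable space Y, let J : Y → Z be a measurable map into a measurable space Z, and let h : Z → [0,∞) be measurable. Suppose P := (h ∘ J) · R (the measure with density h ∘ J with respect to R) is a probability measure. Then J_#P ≪ J_#R with d(J_#P)/d(J_#R) = h holding J_#R-almost everywhere, and KL(P ‖ R) = KL(J_#P ‖ J_#R). (This is the identity used in the paper to show that the KL divergence of a Schrödinger bridge of product form equals the KL divergence of its endpoint marginals to those of the reference measure.) -/
open MeasureTheory Classical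
open scoped NNReal ENNReal

/-- KL divergence: `∫ log(dμ/dν) dμ` if `μ ≪ ν`, and `+∞` otherwise. -/
noncomputable def klDiv {Y : Type*} [MeasurableSpace Y] (μ ν : Measure Y) : EReal :=
  if μ ≪ ν then ((∫ y, Real.log ((μ.rnDeriv ν y).toReal) ∂μ : ℝ) : EReal) else ⊤

/-- If `P = (h ∘ J) · R` is a probability measure, where `h : Z → [0,∞)` is measurable
and `J : Y → Z` is measurable, then `J_#P ≪ J_#R` with density `h`, and
`KL(P‖R) = KL(J_#P‖J_#R)`. -/
theorem klDiv_eq_klDiv_map_of_density_factors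
    {Y Z : Type*} [MeasurableSpace Y] [MeasurableSpace Z]
    (R : Measure Y) [IsProbabilityMeasure R]
    (J : Y → Z) (hJ : Measurable J)
    (h : Z → ℝ≥0) (hh : Measurable h)
    (P : Measure Y) (hP : P = R.withDensity (fun y => (h (J y) : ℝ≥0∞)))
    [IsProbabilityMeasure P] :
    P.map J ≪ R.map J ∧
      (P.map J).rnDeriv (R.map J) =ᵐ[R.map J] (fun z => (h z : ℝ≥0∞)) ∧
      klDiv P R = klDiv (P.map J) (R.map J) := by
  have hhE : Measurable (fun z => (h z : ℝ≥0∞)) := hh.coe_nnreal_ennreal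
  -- key: P.map J = (R.map J).withDensity h
  have hmap : P.map J = (R.map J).withDensity (fun z => (h z : ℝ≥0∞)) := by
    ext B hB
    rw [Measure.map_apply hJ hB, hP,
      withDensity_apply _ (hJ hB), withDensity_apply _ hB,
      ← setLIntegral_map hB hhE hJ]
  have hac : P ≪ R := hP ▸ withDensity_absolutelyContinuous R _
  have hacm : P.map J ≪ R.map J := hmap ▸ withDensity_absolutelyContinuous _ _
  have hrd : P.rnDeriv R =ᵐ[R] (fun y => (h (J y) : ℝ≥0∞)) := by
    rw [hP]; exact Measure.rnDeriv_withDensity R (hhE.comp hJ)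
  have hrdm : (P.map J).rnDeriv (R.map J) =ᵐ[R.map J] (fun z => (h z : ℝ≥0∞)) := by
    rw [hmap]; exact Measure.rnDeriv_withDensity (R.map J) hhE
  refine ⟨hacm, hrdm, ?_⟩
  rw [klDiv, klDiv, if_pos hac, if_pos hacm]
  congr 1
  have h1 : ∫ y, Real.log ((P.rnDeriv R y).toReal) ∂P
      = ∫ y, Real.log ((h (J y) : ℝ≥0∞)).toReal ∂P := by
    refine integral_congr_ae ?_
    filter_upwards [hac.ae_le hrd] with y hy
    rw [hy]
  have h2 : ∫ z, Real.log (((P.map J).rnDeriv (R.map J) z).toReal) ∂(P.map J)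
      = ∫ z, Real.log ((h z : ℝ≥0∞)).toReal ∂(P.map J) := by
    refine integral_congr_ae ?_
    filter_upwards [hacm.ae_le hrdm] with z hz
    rw [hz]
  rw [h1, h2, integral_map hJ.aemeasurable]
  exact (Real.measurable_log.comp hhE.ennreal_toReal).aestronglyMeasurable
end

section
/- Let Ω₁ and Ω₂ be measurable spaces, Φ : Ω₁ → Ω₂ a measurable bijection with measurable inverse, R₁ a probability measure on Ω₁, and R₂ := Φ_#R₁. Let A₁ and A₂ be sets of probability measures on Ω₁ and Ω₂ respectively such that Φ_#P ∈ A₂ for every P ∈ A₁. Suppose P̂₁ ∈ A₁ satisfies KL(P̂₁‖R₁) ≤ KL(P‖R₁) for all P ∈ A₁, and P̂₂ is the unique element of A₂ attaining the minimum of Q ↦ KL(Q‖R₂) over A₂, with KL(P̂₂‖R₂) < ∞. Then KL(P̂₁‖R₁) = KL(P̂₂‖R₂) if and only if Φ_#P̂₁ = P̂₂. (This is the equivalence (i) ⇔ (ii) in the paper's KL divergence comparison theorem, stated for general constraint sets related by the bijection Φ.) -/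
open MeasureTheory Classical

lemma klDiv_map_equiv {Ω₁ Ω₂ : Type*} [MeasurableSpace Ω₁] [MeasurableSpace Ω₂]
    (e : Ω₁ ≃ᵐ Ω₂) (μ ν : Measure Ω₁) [SigmaFinite μ] [SigmaFinite ν] :
    klDiv (μ.map e) (ν.map e) = klDiv μ ν := by
  unfold klDiv
  have hac : (μ.map e) ≪ (ν.map e) ↔ μ ≪ ν := by
    constructor
    · intro h
      have := h.map e.symm.measurable
      simpa [Measure.map_map e.symm.measurable e.measurable,
        e.symm_comp_self] using this
    · exact fun h ↦ h.map e.measurable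
  by_cases h : μ ≪ ν
  · rw [if_pos (hac.mpr h), if_pos h]
    congr 1
    refine (MeasureTheory.integral_map_equiv e
      (fun y ↦ Real.log (((μ.map e).rnDeriv (ν.map e) y).toReal))).trans ?_
    refine integral_congr_ae ?_
    have := e.measurableEmbedding.rnDeriv_map μ ν
    filter_upwards [h this] with x hx
    rw [hx]
  · rw [if_neg (fun hh ↦ h (hac.mp hh)), if_neg h]

/-- With constraint sets related by the measurable bijection `Φ`, minimizers `P₁` over
`A₁` and `P₂` over `A₂` (the latter unique with finite KL divergence), the minimal KL
divergences agree if and only if `Φ_#P₁ = P₂`. -/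
theorem klDiv_min_eq_iff_pushforward_eq
    {Ω₁ Ω₂ : Type*} [MeasurableSpace Ω₁] [MeasurableSpace Ω₂]
    (Φ : Ω₁ → Ω₂) (Ψ : Ω₂ → Ω₁)
    (hΦ : Measurable Φ) (hΨ : Measurable Ψ)
    (hleft : Function.LeftInverse Ψ Φ) (hright : Function.RightInverse Ψ Φ)
    (R₁ : Measure Ω₁) [IsProbabilityMeasure R₁]
    (R₂ : Measure Ω₂) (hR₂ : R₂ = R₁.map Φ)
    (A₁ : Set (Measure Ω₁)) (A₂ : Set (Measure Ω₂))
    (hA₁ : ∀ P ∈ A₁, IsProbabilityMeasure P)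
    (hA₂ : ∀ Q ∈ A₂, IsProbabilityMeasure Q)
    (hmap : ∀ P ∈ A₁, P.map Φ ∈ A₂)
    (P₁ : Measure Ω₁) (hP₁ : P₁ ∈ A₁)
    (hmin₁ : ∀ P ∈ A₁, klDiv P₁ R₁ ≤ klDiv P R₁)
    (P₂ : Measure Ω₂) (hP₂ : P₂ ∈ A₂)
    (hmin₂ : ∀ Q ∈ A₂, klDiv P₂ R₂ ≤ klDiv Q R₂)
    (huniq : ∀ Q ∈ A₂, klDiv Q R₂ = klDiv P₂ R₂ → Q = P₂)
    (hfin : klDiv P₂ R₂ < ⊤) :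
    klDiv P₁ R₁ = klDiv P₂ R₂ ↔ P₁.map Φ = P₂ := by
  haveI : IsProbabilityMeasure P₁ := hA₁ _ hP₁
  let e : Ω₁ ≃ᵐ Ω₂ := ⟨⟨Φ, Ψ, hleft, hright⟩, hΦ, hΨ⟩
  have key : klDiv (P₁.map Φ) R₂ = klDiv P₁ R₁ := by
    rw [hR₂]
    exact klDiv_map_equiv e P₁ R₁
  constructor
  · intro h
    exact huniq _ (hmap _ hP₁) (key.trans h)
  · intro h
    rw [← key, h]
end

section
/- Let Ω, S, E₁, E₂ be measurable spaces, R a probability measure on Ω, A : Ω → S, B : Ω → E₁, and π : E₁ → E₂ measurable maps. Let f : S → [0,∞) be measurable with f ∘ A integrable under R, let g₂ : E₂ → [0,∞) be bounded measurable, and set g := g₂ ∘ π. Let ρ be a probability measure on E₁ with ρ ≪ B_#R. Suppose that (g ∘ B) · E_R[f ∘ A | σ(B)] = (dρ/d(B_#R)) ∘ B holds R-almost everywhere. Then (g₂ ∘ π ∘ B) · E_R[f ∘ A | σ(π ∘ B)] = (d(π_#ρ)/d((π∘B)_#R)) ∘ (π ∘ B) holds R-almost everywhere. (This is the key step in the paper's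 proof that a Schrödinger-system solution in Scenario (1) whose terminal function factors through the coarsening π also solves the static Schrödinger system of Scenario (2).) -/
open MeasureTheory

/-- If a Schrödinger-system terminal equation holds with terminal function
`g = g₂ ∘ π` factoring through the coarsening `π`, then the corresponding terminal
equation holds for the coarsened problem: `(g₂ ∘ π ∘ B) · E_R[f ∘ A | σ(π ∘ B)]`
is a version of `(d(π_#ρ)/d((π∘B)_#R)) ∘ (π ∘ B)`. -/
theorem schroedinger_terminal_equation_coarsening
    {Ω S E₁ E₂ : Type*} {mΩ : MeasurableSpace Ω} {mS : MeasurableSpace S}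
    {mE₁ : MeasurableSpace E₁} {mE₂ : MeasurableSpace E₂}
    (R : Measure Ω) [IsProbabilityMeasure R]
    (A : Ω → S) (hA : Measurable A)
    (B : Ω → E₁) (hB : Measurable B)
    (π : E₁ → E₂) (hπ : Measurable π)
    (f : S → ℝ) (hf : Measurable f) (hf0 : ∀ s, 0 ≤ f s)
    (hfint : Integrable (fun ω => f (A ω)) R)
    (g₂ : E₂ → ℝ) (hg₂ : Measurable g₂) (hg₂0 : ∀ z, 0 ≤ g₂ z)
    (hg₂bdd : ∃ C : ℝ, ∀ z, g₂ z ≤ C)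
    (ρ : Measure E₁) [IsProbabilityMeasure ρ] (hac : ρ ≪ R.map B)
    (hyp : (fun ω => g₂ (π (B ω)) * (R[fun ω' => f (A ω') | mE₁.comap B]) ω)
        =ᵐ[R] fun ω => (ρ.rnDeriv (R.map B) (B ω)).toReal) :
    (fun ω => g₂ (π (B ω)) * (R[fun ω' => f (A ω') | mE₂.comap (π ∘ B)]) ω)
        =ᵐ[R] fun ω =>
          ((ρ.map π).rnDeriv (R.map (π ∘ B)) (π (B ω))).toReal := by
  obtain ⟨C, hC⟩ := hg₂bdd
  have hm₁ : mE₁.comap B ≤ mΩ := hB.comap_le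
  have hπB : Measurable (π ∘ B) := hπ.comp hB
  have hm₂ : mE₂.comap (π ∘ B) ≤ mΩ := hπB.comap_le
  have hm₂₁ : mE₂.comap (π ∘ B) ≤ mE₁.comap B := by
    rw [← MeasurableSpace.comap_comp]
    exact MeasurableSpace.comap_mono hπ.comap_le
  -- the map π ∘ B is measurable from (Ω, comap (π∘B))
  have hπB₂ : @Measurable Ω E₂ (mE₂.comap (π ∘ B)) mE₂ (π ∘ B) := fun s hs => ⟨s, hs, rfl⟩
  set G : Ω → ℝ := fun ω => g₂ (π (B ω)) with hGdef
  have hGm₂ : @StronglyMeasurable Ω ℝ _ (mE₂.comap (π ∘ B)) G :=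
    (hg₂.comp hπB₂).stronglyMeasurable
  have hGm₁ : @StronglyMeasurable Ω ℝ _ (mE₁.comap B) G := hGm₂.mono hm₂₁
  set FA : Ω → ℝ := fun ω => f (A ω) with hFAdef
  have hGbound : ∃ C', ∀ ω, ‖G ω‖ ≤ C' := by
    refine ⟨C, fun ω => ?_⟩
    rw [Real.norm_eq_abs, abs_of_nonneg (hg₂0 _)]
    exact hC _
  have hGFA_int : Integrable (G * FA) R :=
    hfint.bdd_mul ((hGm₂.mono hm₂).aestronglyMeasurable) (Filter.Eventually.of_forall hGbound.choose_spec)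
  -- pull-out at level m₁ and m₂
  have hpull₁ : R[G * FA | mE₁.comap B] =ᵐ[R] G * R[FA | mE₁.comap B] :=
    condExp_mul_of_stronglyMeasurable_left hGm₁ hGFA_int hfint
  have hpull₂ : R[G * FA | mE₂.comap (π ∘ B)] =ᵐ[R] G * R[FA | mE₂.comap (π ∘ B)] :=
    condExp_mul_of_stronglyMeasurable_left hGm₂ hGFA_int hfint
  -- tower property
  have htower : R[R[G * FA | mE₁.comap B] | mE₂.comap (π ∘ B)]
      =ᵐ[R] R[G * FA | mE₂.comap (π ∘ B)] :=
    condExp_condExp_of_le hm₂₁ hm₁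
  -- measures on E₁, E₂
  have hν₂eq : (R.map B).map π = R.map (π ∘ B) := Measure.map_map hπ hB
  haveI : IsProbabilityMeasure (R.map B) := Measure.isProbabilityMeasure_map hB.aemeasurable
  haveI : IsProbabilityMeasure (R.map (π ∘ B)) := Measure.isProbabilityMeasure_map hπB.aemeasurable
  haveI : IsProbabilityMeasure (ρ.map π) := Measure.isProbabilityMeasure_map hπ.aemeasurable
  have hac₂ : ρ.map π ≪ R.map (π ∘ B) := hν₂eq ▸ hac.map hπ
  set h : E₁ → ℝ := fun y => (ρ.rnDeriv (R.map B) y).toReal with hhdef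
  set d : E₂ → ℝ := fun z => ((ρ.map π).rnDeriv (R.map (π ∘ B)) z).toReal with hddef
  have hhm : Measurable h := (Measure.measurable_rnDeriv _ _).ennreal_toReal
  have hdm : Measurable d := (Measure.measurable_rnDeriv _ _).ennreal_toReal
  have hh_int : Integrable h (R.map B) := Measure.integrable_toReal_rnDeriv
  have hd_int : Integrable d (R.map (π ∘ B)) := Measure.integrable_toReal_rnDeriv
  have hhB_int : Integrable (h ∘ B) R :=
    (integrable_map_measure hhm.aestronglyMeasurable hB.aemeasurable).mp hh_int
  have hdπB_int : Integrable (d ∘ (π ∘ B)) R :=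
    (integrable_map_measure hdm.aestronglyMeasurable hπB.aemeasurable).mp hd_int
  -- the RHS is the conditional expectation of h ∘ B given m₂
  have hkey : (d ∘ (π ∘ B)) =ᵐ[R] R[h ∘ B | mE₂.comap (π ∘ B)] := by
    refine ae_eq_condExp_of_forall_setIntegral_eq hm₂ hhB_int
      (fun s _ _ => hdπB_int.integrableOn) (fun s hs _ => ?_)
      ((hdm.comp hπB₂).stronglyMeasurable.aestronglyMeasurable)
    obtain ⟨t, ht, rfl⟩ := hs
    have h1 : ∫ ω in (π ∘ B) ⁻¹' t, d ((π ∘ B) ω) ∂(R) = ∫ z in t, d z ∂(R.map (π ∘ B)) :=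
      (setIntegral_map ht hdm.aestronglyMeasurable hπB.aemeasurable).symm
    have h2 : ∫ z in t, d z ∂(R.map (π ∘ B)) = ((ρ.map π) t).toReal :=
      Measure.setIntegral_toReal_rnDeriv hac₂ t
    have h3 : ((ρ.map π) t).toReal = (ρ (π ⁻¹' t)).toReal := by
      rw [Measure.map_apply hπ ht]
    have h4 : ∫ y in π ⁻¹' t, h y ∂(R.map B) = (ρ (π ⁻¹' t)).toReal :=
      Measure.setIntegral_toReal_rnDeriv hac _
    have h5 : ∫ ω in B ⁻¹' (π ⁻¹' t), h (B ω) ∂(R) = ∫ y in π ⁻¹' t, h y ∂(R.map B) :=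
      (setIntegral_map (hπ ht) hhm.aestronglyMeasurable hB.aemeasurable).symm
    calc ∫ ω in (π ∘ B) ⁻¹' t, (d ∘ (π ∘ B)) ω ∂(R)
        = ((ρ.map π) t).toReal := by rw [← h2, ← h1]; rfl
      _ = ∫ ω in B ⁻¹' (π ⁻¹' t), h (B ω) ∂(R) := by rw [h3, ← h4, h5]
      _ = ∫ ω in (π ∘ B) ⁻¹' t, (h ∘ B) ω ∂(R) := rfl
  -- chain everything
  have hchain : G * R[FA | mE₂.comap (π ∘ B)] =ᵐ[R] (d ∘ (π ∘ B)) := by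
    calc G * R[FA | mE₂.comap (π ∘ B)]
        =ᵐ[R] R[G * FA | mE₂.comap (π ∘ B)] := hpull₂.symm
      _ =ᵐ[R] R[R[G * FA | mE₁.comap B] | mE₂.comap (π ∘ B)] := htower.symm
      _ =ᵐ[R] R[G * R[FA | mE₁.comap B] | mE₂.comap (π ∘ B)] := condExp_congr_ae hpull₁
      _ =ᵐ[R] R[h ∘ B | mE₂.comap (π ∘ B)] := condExp_congr_ae hyp
      _ =ᵐ[R] (d ∘ (π ∘ B)) := hkey.symm
  filter_upwards [hchain] with ω hω
  exact hω
end
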